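/- Let (X_n) be a homogeneous Markov chain on a measurable state space E, φ : E → [0, C] measurable, and δ > 0 such that for every starting point x ∈ E, ℙ(Σ_{n≥0} φ(X_n) ≤ C | X₀ = x) ≥ δ. Then Σ_{n≥0} φ(X_n) is almost surely finite, integrable, and 𝔼[Σ_{n≥0} φ(X_n)] ≤ C/δ. -/

import Mathlib

open MeasureTheory ProbabilityTheory

namespace Stmt10Aux

variable {E : Type*} [MeasurableSpace E]

/-- The shift by `n` on trajectories. -/
def shift (n : ℕ) (ω : ℕ → E) : ℕ → E := fun k => ω (k + n)

lemma measurable_shift (n : ℕ) : Measurable (shift (E := E) n) :=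
  measurable_pi_lambda _ fun _ => measurable_pi_apply _

/-- Iterated Markov property at the level of Lebesgue integrals: integrating a
function of the trajectory shifted by `n` amounts to integrating against the
chain restarted at the position at time `n`. -/
lemma lintegral_shift (κ : Kernel E (ℕ → E)) [IsMarkovKernel κ]
    (h0 : ∀ x : E, ∀ᵐ ω ∂(κ x), ω 0 = x)
    (hMarkov : ∀ x : E,
      Measure.map (fun ω n => ω (n + 1)) (κ x) = (κ x).bind fun ω => κ (ω 1))
    (g : (ℕ → E) → ENNReal) (hg : Measurable g) :
    ∀ (n : ℕ) (x : E),
      ∫⁻ ω, g (shift n ω) ∂(κ x) = ∫⁻ ω, ∫⁻ ω', g ω' ∂(κ (ω n)) ∂(κ x) := by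
  intro n
  induction n with
  | zero =>
    intro x
    have h1 : ∀ᵐ ω ∂(κ x), (∫⁻ ω', g ω' ∂(κ (ω 0))) = ∫⁻ ω', g ω' ∂(κ x) := by
      filter_upwards [h0 x] with ω hω
      rw [hω]
    symm
    rw [lintegral_congr_ae h1, lintegral_const, measure_univ, mul_one]
    rfl
  | succ n ih =>
    intro x
    have hmeas1 : Measurable fun ω : ℕ → E => κ (ω 1) :=
      κ.measurable.comp (measurable_pi_apply 1)
    have hh : Measurable fun y : E => ∫⁻ ω', g ω' ∂(κ y) :=
      (Measure.measurable_lintegral hg).comp κ.measurable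
    have hH : Measurable fun ω' : ℕ → E => ∫⁻ ω'', g ω'' ∂(κ (ω' n)) :=
      hh.comp (measurable_pi_apply n)
    calc ∫⁻ ω, g (shift (n + 1) ω) ∂(κ x)
        = ∫⁻ ω, (g ∘ shift n) (shift 1 ω) ∂(κ x) := rfl
      _ = ∫⁻ ω, (g ∘ shift n) ω ∂(Measure.map (fun ω n => ω (n + 1)) (κ x)) :=
          (lintegral_map (hg.comp (measurable_shift n)) (measurable_shift 1)).symm
      _ = ∫⁻ ω, (g ∘ shift n) ω ∂((κ x).bind fun ω => κ (ω 1)) := by rw [hMarkov x]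
      _ = ∫⁻ ω, ∫⁻ ω', (g ∘ shift n) ω' ∂(κ (ω 1)) ∂(κ x) :=
          Measure.lintegral_bind hmeas1.aemeasurable (hg.comp (measurable_shift n)).aemeasurable
      _ = ∫⁻ ω, ∫⁻ ω', (∫⁻ ω'', g ω'' ∂(κ (ω' n))) ∂(κ (ω 1)) ∂(κ x) :=
          lintegral_congr fun ω => ih (ω 1)
      _ = ∫⁻ ω', (∫⁻ ω'', g ω'' ∂(κ (ω' n))) ∂((κ x).bind fun ω => κ (ω 1)) :=
          (Measure.lintegral_bind hmeas1.aemeasurable hH.aemeasurable).symm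
      _ = ∫⁻ ω, (fun ω' => ∫⁻ ω'', g ω'' ∂(κ (ω' n))) (shift 1 ω) ∂(κ x) := by
          rw [← hMarkov x]
          exact lintegral_map hH (measurable_shift 1)
      _ = ∫⁻ ω, ∫⁻ ω', g ω' ∂(κ (ω (n + 1))) ∂(κ x) := rfl

end Stmt10Aux

open Stmt10Aux

/-- Let `κ x` be the law of the trajectory of a homogeneous Markov chain started at
`x` (so `κ x`-a.s. `ω 0 = x`, and the law of the shifted trajectory is the mixture
of the laws started at `ω 1`). If `φ : E → [0, C]` is measurable and for every
starting point `x` the probability that `∑ₙ φ(Xₙ) ≤ C` is at least `δ > 0`, then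
`∑ₙ φ(Xₙ)` is a.s. finite, integrable, and its expectation is at most `C / δ`. -/
theorem stmt10 {E : Type*} [MeasurableSpace E]
    (κ : Kernel E (ℕ → E)) [IsMarkovKernel κ]
    (h0 : ∀ x : E, ∀ᵐ ω ∂(κ x), ω 0 = x)
    (hMarkov : ∀ x : E,
      Measure.map (fun ω n => ω (n + 1)) (κ x) = (κ x).bind fun ω => κ (ω 1))
    (φ : E → ENNReal) (hφm : Measurable φ)
    (C : ENNReal) (hC0 : 0 < C) (hC : C ≠ ⊤) (hφC : ∀ x, φ x ≤ C)
    (δ : ENNReal) (hδ : 0 < δ)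
    (hhyp : ∀ x : E, δ ≤ κ x {ω | ∑' n, φ (ω n) ≤ C}) :
    ∀ x : E, (∀ᵐ ω ∂(κ x), ∑' n, φ (ω n) < ⊤) ∧
      ∫⁻ ω, ∑' n, φ (ω n) ∂(κ x) ≤ C / δ := by
  classical
  intro x
  -- the total sum along the trajectory
  set S : (ℕ → E) → ENNReal := fun ω => ∑' n, φ (ω n) with hS_def
  have hSm : Measurable S :=
    Measurable.ennreal_tsum fun n => hφm.comp (measurable_pi_apply n)
  have hAmeas : MeasurableSet {ω : ℕ → E | C < S ω} :=
    measurableSet_lt measurable_const hSm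
  -- the "one-step" integrand
  set G : (ℕ → E) → ENNReal := fun ω => if C < S ω then φ (ω 0) else 0 with hG_def
  have hGm : Measurable G :=
    Measurable.ite hAmeas (hφm.comp (measurable_pi_apply 0)) measurable_const
  have hδ1 : δ ≤ 1 := le_trans (hhyp x) prob_le_one
  have hδtop : δ ≠ ⊤ := ne_top_of_le_ne_top ENNReal.one_ne_top hδ1
  -- starting from any point `y`, the integral of `G` is at most `φ y * (1 - δ)`
  have hinner : ∀ y : E, ∫⁻ ω, G ω ∂(κ y) ≤ φ y * (1 - δ) := by
    intro y
    have h1 : ∀ᵐ ω ∂(κ y),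
        G ω = {ω : ℕ → E | C < S ω}.indicator (fun _ => φ y) ω := by
      filter_upwards [h0 y] with ω hω
      simp only [hG_def, Set.indicator, Set.mem_setOf_eq, hω]
    rw [lintegral_congr_ae h1, lintegral_indicator_const hAmeas]
    have h2 : (κ y) {ω | C < S ω} ≤ 1 - δ := by
      have hc : {ω : ℕ → E | C < S ω} = {ω : ℕ → E | S ω ≤ C}ᶜ := by
        ext ω; simp [not_le]
      rw [hc, measure_compl (measurableSet_le hSm measurable_const) (measure_ne_top _ _),
        measure_univ]
      exact tsub_le_tsub_left (hhyp y) 1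
    gcongr
  -- per-time-step bound
  have hB : ∀ n : ℕ, ∫⁻ ω, G (shift n ω) ∂(κ x)
      ≤ (1 - δ) * ∫⁻ ω, φ (ω n) ∂(κ x) := by
    intro n
    rw [lintegral_shift κ h0 hMarkov G hGm n x]
    calc ∫⁻ ω, ∫⁻ ω', G ω' ∂(κ (ω n)) ∂(κ x)
        ≤ ∫⁻ ω, φ (ω n) * (1 - δ) ∂(κ x) := lintegral_mono fun ω => hinner (ω n)
      _ = (∫⁻ ω, φ (ω n) ∂(κ x)) * (1 - δ) :=
          lintegral_mul_const _ (hφm.comp (measurable_pi_apply n))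
      _ = (1 - δ) * ∫⁻ ω, φ (ω n) ∂(κ x) := mul_comm _ _
  -- pointwise bound on partial sums
  have hGn : ∀ (ω : ℕ → E) (n : ℕ), C < S (shift n ω) → G (shift n ω) = φ (ω n) := by
    intro ω n hn
    have h : G (shift n ω) = φ (ω (0 + n)) := if_pos hn
    rw [h, Nat.zero_add]
  have hA : ∀ (N : ℕ) (ω : ℕ → E),
      ∑ n ∈ Finset.range N, φ (ω n) ≤ C + ∑ n ∈ Finset.range N, G (shift n ω) := by
    intro N ω
    by_cases hex : ∃ m, m < N ∧ S (shift m ω) ≤ C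
    · set m₀ := Nat.find hex with hm₀
      obtain ⟨hm₀N, hm₀le⟩ := Nat.find_spec hex
      have hlt : ∀ k, k < m₀ → C < S (shift k ω) := by
        intro k hk
        have := Nat.find_min hex hk
        push_neg at this
        exact this (lt_trans hk hm₀N)
      have hsplit : ∑ n ∈ Finset.range m₀, φ (ω n) + ∑ n ∈ Finset.Ico m₀ N, φ (ω n)
          = ∑ n ∈ Finset.range N, φ (ω n) := by
        rw [Finset.range_eq_Ico, Finset.range_eq_Ico]
        exact Finset.sum_Ico_consecutive _ (Nat.zero_le m₀) (le_of_lt hm₀N)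
      have hchunk1 : ∑ n ∈ Finset.range m₀, φ (ω n)
          ≤ ∑ n ∈ Finset.range N, G (shift n ω) := by
        calc ∑ n ∈ Finset.range m₀, φ (ω n)
            = ∑ n ∈ Finset.range m₀, G (shift n ω) :=
              Finset.sum_congr rfl fun n hn =>
                (hGn ω n (hlt n (Finset.mem_range.mp hn))).symm
          _ ≤ ∑ n ∈ Finset.range N, G (shift n ω) :=
              Finset.sum_le_sum_of_subset
                (Finset.range_mono (le_of_lt hm₀N))
      have hchunk2 : ∑ n ∈ Finset.Ico m₀ N, φ (ω n) ≤ C := by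
        refine le_trans ?_ hm₀le
        rw [Finset.sum_Ico_eq_sum_range]
        calc ∑ i ∈ Finset.range (N - m₀), φ (ω (m₀ + i))
            ≤ ∑' i, φ (ω (m₀ + i)) := ENNReal.sum_le_tsum _
          _ = ∑' i, φ (ω (i + m₀)) := by
              congr 1; funext i; rw [Nat.add_comm]
          _ = S (shift m₀ ω) := rfl
      calc ∑ n ∈ Finset.range N, φ (ω n)
          = ∑ n ∈ Finset.range m₀, φ (ω n) + ∑ n ∈ Finset.Ico m₀ N, φ (ω n) :=
            hsplit.symm
        _ ≤ ∑ n ∈ Finset.range N, G (shift n ω) + C := add_le_add hchunk1 hchunk2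
        _ = C + ∑ n ∈ Finset.range N, G (shift n ω) := add_comm _ _
    · push_neg at hex
      have : ∑ n ∈ Finset.range N, φ (ω n) = ∑ n ∈ Finset.range N, G (shift n ω) :=
        Finset.sum_congr rfl fun n hn =>
          (hGn ω n (hex n (Finset.mem_range.mp hn))).symm
      rw [this]
      exact le_add_self
  -- each single-term integral is at most `C`
  have hφn : ∀ n : ℕ, ∫⁻ ω, φ (ω n) ∂(κ x) ≤ C := by
    intro n
    calc ∫⁻ ω, φ (ω n) ∂(κ x) ≤ ∫⁻ _, C ∂(κ x) := lintegral_mono fun ω => hφC _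
      _ = C := by rw [lintegral_const, measure_univ, mul_one]
  -- bound on the expectation of the partial sums
  have hAN : ∀ N : ℕ, ∑ n ∈ Finset.range N, ∫⁻ ω, φ (ω n) ∂(κ x) ≤ C / δ := by
    intro N
    set a := ∑ n ∈ Finset.range N, ∫⁻ ω, φ (ω n) ∂(κ x) with ha
    have hafin : a ≠ ⊤ := by
      have h : a ≤ ∑ _n ∈ Finset.range N, C := Finset.sum_le_sum fun n _ => hφn n
      simp only [Finset.sum_const, Finset.card_range, nsmul_eq_mul] at h
      exact ne_top_of_le_ne_top (ENNReal.mul_ne_top (ENNReal.natCast_ne_top N) hC) h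
    have hmain : a ≤ C + (1 - δ) * a := by
      calc a = ∫⁻ ω, ∑ n ∈ Finset.range N, φ (ω n) ∂(κ x) :=
            (lintegral_finset_sum _ fun n _ => hφm.comp (measurable_pi_apply n)).symm
        _ ≤ ∫⁻ ω, (C + ∑ n ∈ Finset.range N, G (shift n ω)) ∂(κ x) :=
            lintegral_mono fun ω => hA N ω
        _ = C + ∫⁻ ω, ∑ n ∈ Finset.range N, G (shift n ω) ∂(κ x) := by
            rw [lintegral_add_left measurable_const, lintegral_const, measure_univ,
              mul_one]
        _ = C + ∑ n ∈ Finset.range N, ∫⁻ ω, G (shift n ω) ∂(κ x) := by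
            congr 1
            exact lintegral_finset_sum _ fun n _ => hGm.comp (measurable_shift n)
        _ ≤ C + ∑ n ∈ Finset.range N, (1 - δ) * ∫⁻ ω, φ (ω n) ∂(κ x) :=
            add_le_add le_rfl (Finset.sum_le_sum fun n _ => hB n)
        _ = C + (1 - δ) * a := by rw [← Finset.mul_sum]
    have h1 : δ + (1 - δ) = 1 := add_tsub_cancel_of_le hδ1
    have h2 : δ * a + (1 - δ) * a ≤ C + (1 - δ) * a := by
      rw [← add_mul, h1, one_mul]; exact hmain
    have hfin2 : (1 - δ) * a ≠ ⊤ :=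
      ENNReal.mul_ne_top (ne_top_of_le_ne_top ENNReal.one_ne_top tsub_le_self) hafin
    have h3 : δ * a ≤ C := (ENNReal.add_le_add_iff_right hfin2).mp h2
    exact (ENNReal.le_div_iff_mul_le (Or.inl hδ.ne') (Or.inl hδtop)).mpr
      (by rw [mul_comm]; exact h3)
  have hint : ∫⁻ ω, S ω ∂(κ x) ≤ C / δ := by
    have h : ∫⁻ ω, S ω ∂(κ x) = ∑' n, ∫⁻ ω, φ (ω n) ∂(κ x) :=
      lintegral_tsum fun n => (hφm.comp (measurable_pi_apply n)).aemeasurable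
    rw [h, ENNReal.tsum_eq_iSup_nat]
    exact iSup_le hAN
  refine ⟨?_, hint⟩
  have htop : C / δ ≠ ⊤ := (ENNReal.div_lt_top hC hδ.ne').ne
  exact ae_lt_top hSm (ne_top_of_le_ne_top htop hint)
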